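/- Every extreme point z of the polytope P has at most k + m nonzero coordinates, i.e. the set {(i,j) : z_{i,j} ≠ 0} has cardinality at most k + m. -/

import Mathlib

lemma exists_kernel_vec (k m : ℕ) (S : Finset (Fin k × Fin m)) (hS : k + m < S.card) :
    ∃ w : Fin k → Fin m → ℝ, w ≠ 0 ∧ (∀ i, ∑ j, w i j = 0) ∧ (∀ j, ∑ i, w i j = 0) ∧
      ∀ p : Fin k × Fin m, p ∉ S → w p.1 p.2 = 0 := by
  classical
  let L : (Fin k → Fin m → ℝ) →ₗ[ℝ]
      ((Fin k → ℝ) × (Fin m → ℝ) × ({p : Fin k × Fin m // p ∉ S} → ℝ)) :=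
    { toFun := fun w => (fun i => ∑ j, w i j, fun j => ∑ i, w i j, fun p => w p.1.1 p.1.2)
      map_add' := by
        intro a b
        refine Prod.ext ?_ (Prod.ext ?_ ?_) <;> funext <;>
          simp [Finset.sum_add_distrib]
      map_smul' := by
        intro c a
        refine Prod.ext ?_ (Prod.ext ?_ ?_) <;> funext <;>
          simp [Finset.mul_sum] }
  have hcard : Fintype.card {p : Fin k × Fin m // p ∉ S} = k * m - S.card := by
    have := Fintype.card_subtype_compl (fun p : Fin k × Fin m => p ∈ S)
    simpa [Fintype.card_coe, Fintype.card_prod] using this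
  have hr1 : Module.finrank ℝ (Fin k → Fin m → ℝ) = k * m := by
    simp [Module.finrank_pi_fintype]
  have hr2 : Module.finrank ℝ ((Fin k → ℝ) × (Fin m → ℝ) × ({p : Fin k × Fin m // p ∉ S} → ℝ))
      = k + (m + (k * m - S.card)) := by
    simp [Module.finrank_prod, Module.finrank_fintype_fun_eq_card, hcard]
  have hScard_le : S.card ≤ k * m := by
    simpa [Fintype.card_prod] using S.card_le_univ
  have hnotinj : ¬ Function.Injective L := by
    intro hinj
    have hle := LinearMap.finrank_le_finrank_of_injective hinj
    rw [hr1, hr2] at hle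
    omega
  rw [← LinearMap.ker_eq_bot] at hnotinj
  obtain ⟨w, hwker, hwne⟩ := Submodule.ne_bot_iff _ |>.mp hnotinj
  have hLw : L w = 0 := hwker
  refine ⟨w, hwne, ?_, ?_, ?_⟩
  · intro i; exact congrFun (congrArg Prod.fst hLw) i
  · intro j; exact congrFun (congrArg (Prod.fst ∘ Prod.snd) hLw) j
  · intro p hp; exact congrFun (congrArg (Prod.snd ∘ Prod.snd) hLw) ⟨p, hp⟩

/-- Every extreme point of the contextual-blocking-bandits LP polytope
`P = {z : z ≥ 0, ∑_j z_{i,j} ≤ 1/d_i ∀i, ∑_i z_{i,j} ≤ f_j ∀j}` has at most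
`k + m` nonzero coordinates. -/
theorem lp_extreme_point_sparse (k m : ℕ) (hk : 0 < k) (hm : 0 < m)
    (d : Fin k → ℝ) (hd : ∀ i, 1 ≤ d i)
    (f : Fin m → ℝ) (hf : ∀ j, 0 ≤ f j)
    (z : Fin k → Fin m → ℝ)
    (hz : z ∈ Set.extremePoints ℝ
      {w : Fin k → Fin m → ℝ |
        (∀ i j, 0 ≤ w i j) ∧
        (∀ i, ∑ j, w i j ≤ 1 / d i) ∧
        (∀ j, ∑ i, w i j ≤ f j)}) :
    (Finset.univ.filter (fun p : Fin k × Fin m => z p.1 p.2 ≠ 0)).card ≤ k + m := by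
  classical
  by_contra hcard
  push_neg at hcard
  set S : Finset (Fin k × Fin m) :=
    Finset.univ.filter (fun p : Fin k × Fin m => z p.1 p.2 ≠ 0) with hSdef
  obtain ⟨w, hwne, hrow, hcol, hsupp⟩ := exists_kernel_vec k m S hcard
  obtain ⟨hzP, hzext⟩ := hz
  obtain ⟨hz0, hz1, hz2⟩ := hzP
  have hSne : S.Nonempty := Finset.card_pos.mp (by omega)
  -- choose ε
  set ε : ℝ := S.inf' hSne (fun p => z p.1 p.2 / (|w p.1 p.2| + 1)) with hεdef
  have hεpos : 0 < ε := by
    rw [hεdef, Finset.lt_inf'_iff]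
    intro p hp
    have hzp : z p.1 p.2 ≠ 0 := (Finset.mem_filter.mp hp).2
    have : 0 < z p.1 p.2 := lt_of_le_of_ne (hz0 p.1 p.2) (Ne.symm hzp)
    positivity
  have hkey : ∀ i j, ε * |w i j| ≤ z i j := by
    intro i j
    by_cases hij : (i, j) ∈ S
    · have h1 : ε ≤ z i j / (|w i j| + 1) := Finset.inf'_le _ hij
      have h2 : 0 < |w i j| + 1 := by positivity
      have h3 : ε * (|w i j| + 1) ≤ z i j := by
        rw [div_eq_mul_inv] at h1
        calc ε * (|w i j| + 1) ≤ (z i j * (|w i j| + 1)⁻¹) * (|w i j| + 1) := by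
              apply mul_le_mul_of_nonneg_right h1 h2.le
          _ = z i j := by field_simp
      calc ε * |w i j| ≤ ε * (|w i j| + 1) := by nlinarith [abs_nonneg (w i j)]
        _ ≤ z i j := h3
    · have : w i j = 0 := hsupp (i, j) hij
      simp [this, hz0 i j]
  have habs : ∀ i j, |ε * w i j| ≤ z i j := by
    intro i j
    rw [abs_mul, abs_of_pos hεpos]
    exact hkey i j
  -- the two perturbed points
  have hmem : ∀ s : ℝ, |s| = 1 → (z + (s * ε) • w) ∈
      {w : Fin k → Fin m → ℝ |
        (∀ i j, 0 ≤ w i j) ∧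
        (∀ i, ∑ j, w i j ≤ 1 / d i) ∧
        (∀ j, ∑ i, w i j ≤ f j)} := by
    intro s hs
    refine ⟨?_, ?_, ?_⟩
    · intro i j
      have h1 : |s * ε * w i j| ≤ z i j := by
        rw [abs_mul, abs_mul, hs, one_mul, ← abs_mul]
        exact habs i j
      have := neg_abs_le (s * ε * w i j)
      simp only [Pi.add_apply, Pi.smul_apply, smul_eq_mul]
      linarith
    · intro i
      have : ∑ j, (z i j + s * ε * w i j) = ∑ j, z i j + s * ε * ∑ j, w i j := by
        rw [Finset.sum_add_distrib, ← Finset.mul_sum]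
      simp only [Pi.add_apply, Pi.smul_apply, smul_eq_mul]
      rw [this, hrow i, mul_zero, add_zero]
      exact hz1 i
    · intro j
      have : ∑ i, (z i j + s * ε * w i j) = ∑ i, z i j + s * ε * ∑ i, w i j := by
        rw [Finset.sum_add_distrib, ← Finset.mul_sum]
      simp only [Pi.add_apply, Pi.smul_apply, smul_eq_mul]
      rw [this, hcol j, mul_zero, add_zero]
      exact hz2 j
  have hx := hmem (-1) (by norm_num)
  have hy := hmem 1 (by norm_num)
  have hopen : z ∈ openSegment ℝ (z + ((-1 : ℝ) * ε) • w) (z + ((1 : ℝ) * ε) • w) := by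
    refine ⟨1/2, 1/2, by norm_num, by norm_num, by norm_num, ?_⟩
    module
  have := hzext hy hx (by rw [openSegment_symm]; exact hopen)
  have hεw : ((1 : ℝ) * ε) • w = 0 := by
    have h := this
    have : z + ((1 : ℝ) * ε) • w - z = z - z := by rw [h]
    simpa using this
  have : w = 0 := by
    have hne : (1 : ℝ) * ε ≠ 0 := by positivity
    exact (smul_eq_zero.mp hεw).resolve_left hne
  exact hwne this
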